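/- Let (u_n) be a sequence of measurable functions on ℝᴺ, bounded in L²(ℝᴺ) and in L^q(ℝᴺ) for some q > 2, converging almost everywhere to u, and let F : ℝ → ℝ be C¹ with |F'(t)| ≤ a(|t| + |t|^{q−1}). Then ∫_{ℝᴺ} |F(u_n) − F(u_n − u) − F(u)| → 0 as n → ∞. -/

import Mathlib

open MeasureTheory Filter Real
open scoped Topology ENNReal

-- Young-type inequality
lemma aux_young (p δ x y : ℝ) (hp : 1 ≤ p) (hδ : 0 < δ) (hx : 0 ≤ x) (hy : 0 ≤ y) :
    x ^ (p - 1) * y ≤ δ * x ^ p + δ ^ (1 - p) * y ^ p := by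
  have hp1 : (0:ℝ) ≤ p - 1 := by linarith
  rcases eq_or_lt_of_le hx with hx0 | hx0
  · rcases eq_or_lt_of_le hp with hp' | hp'
    · simp [← hp', Real.rpow_zero]
      nlinarith [Real.rpow_le_rpow hy (le_refl y) (le_of_lt one_pos)]
    · rw [← hx0]
      rw [Real.zero_rpow (by linarith : p - 1 ≠ 0)]
      have : (0:ℝ) ^ p = 0 := Real.zero_rpow (by linarith)
      rw [this]
      have : 0 ≤ δ ^ (1-p) * y ^ p := by positivity
      linarith
  · rcases le_or_gt y (δ * x) with hc | hc
    · have h1 : x ^ (p-1) * y ≤ x ^ (p-1) * (δ * x) := by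
        apply mul_le_mul_of_nonneg_left hc (Real.rpow_nonneg hx _)
      have h2 : x ^ (p-1) * (δ * x) = δ * x ^ p := by
        rw [show x ^ (p-1) * (δ * x) = δ * (x ^ (p-1) * x) by ring,
          ← Real.rpow_add_one (ne_of_gt hx0)]
        ring_nf
      have h3 : 0 ≤ δ ^ (1-p) * y ^ p := by positivity
      linarith [h1.trans_eq h2]
    · have hy0 : 0 < y := lt_trans (by positivity) hc
      have hxy : x ≤ y / δ := by rw [le_div_iff₀ hδ]; nlinarith
      have h1 : x ^ (p-1) ≤ (y/δ) ^ (p-1) := Real.rpow_le_rpow hx hxy hp1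
      have h2 : (y/δ) ^ (p-1) * y = δ ^ (1-p) * y ^ p := by
        rw [Real.div_rpow hy (le_of_lt hδ)]
        rw [div_mul_eq_mul_div, ← Real.rpow_add_one (ne_of_gt hy0)]
        rw [div_eq_mul_inv, ← Real.rpow_neg (le_of_lt hδ)]
        ring_nf
      have h3 : 0 ≤ δ * x ^ p := by positivity
      have : x ^ (p-1) * y ≤ (y/δ) ^ (p-1) * y :=
        mul_le_mul_of_nonneg_right h1 (le_of_lt hy0)
      linarith [this.trans_eq h2]

-- (x+y)^r ≤ 2^r (x^r + y^r)
lemma aux_two_rpow (r x y : ℝ) (hr : 0 ≤ r) (hx : 0 ≤ x) (hy : 0 ≤ y) :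
    (x + y) ^ r ≤ 2 ^ r * (x ^ r + y ^ r) := by
  have h1 : x + y ≤ 2 * max x y := by
    rcases max_cases x y with ⟨h, h'⟩ | ⟨h, h'⟩ <;> rw [h] <;> linarith
  have h2 : (x+y) ^ r ≤ (2 * max x y) ^ r :=
    Real.rpow_le_rpow (by linarith) h1 hr
  rw [Real.mul_rpow (by norm_num) (le_trans hx (le_max_left x y))] at h2
  refine h2.trans ?_
  apply mul_le_mul_of_nonneg_left _ (Real.rpow_nonneg (by norm_num) r)
  rcases max_cases x y with ⟨h, _⟩ | ⟨h, _⟩ <;> rw [h]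
  · exact le_add_of_nonneg_right (Real.rpow_nonneg hy r)
  · exact le_add_of_nonneg_left (Real.rpow_nonneg hx r)

lemma aux_grow (q a : ℝ) (hq : 2 < q) (ha : 0 < a) (F : ℝ → ℝ) (hF : ContDiff ℝ 1 F)
    (hF' : ∀ t : ℝ, |deriv F t| ≤ a * (|t| + |t| ^ (q - 1))) (s t : ℝ) :
    |F (s + t) - F s| ≤ a * ((|s| + |t|) + (|s| + |t|) ^ (q - 1)) * |t| := by
  set R := |s| + |t| with hR
  have hR0 : 0 ≤ R := by positivity
  have hdiff : ∀ x ∈ Set.Icc (-R) R, DifferentiableAt ℝ F x := fun x _ =>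
    (hF.differentiable one_ne_zero).differentiableAt
  have hbound : ∀ x ∈ Set.Icc (-R) R, ‖deriv F x‖ ≤ a * (R + R ^ (q - 1)) := by
    intro x hx
    have hxR : |x| ≤ R := abs_le.mpr ⟨hx.1, hx.2⟩
    refine (hF' x).trans ?_
    have : |x| ^ (q-1) ≤ R ^ (q-1) := Real.rpow_le_rpow (abs_nonneg x) hxR (by linarith)
    nlinarith [abs_nonneg x]
  have hs : s ∈ Set.Icc (-R) R := by
    constructor <;> [nlinarith [abs_nonneg t, neg_abs_le s, le_abs_self s];
      nlinarith [abs_nonneg t, le_abs_self s]]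
  have hst : s + t ∈ Set.Icc (-R) R := by
    have h1 := neg_abs_le s; have h2 := le_abs_self s
    have h3 := neg_abs_le t; have h4 := le_abs_self t
    constructor <;> simp only [hR] <;> linarith
  have := Convex.norm_image_sub_le_of_norm_deriv_le hdiff hbound (convex_Icc _ _) hs hst
  simpa [Real.norm_eq_abs, add_sub_cancel_left] using this

lemma aux_mul_self (x r : ℝ) (hx : 0 ≤ x) (hr : 1 < r) : x ^ (r-1) * x = x ^ r := by
  rcases eq_or_lt_of_le hx with h | h
  · rw [← h, Real.zero_rpow (by linarith : r - 1 ≠ 0), Real.zero_rpow (by linarith : r ≠ 0)]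
    ring
  · rw [← Real.rpow_add_one (ne_of_gt h)]; ring_nf

lemma aux_Ft (q a : ℝ) (hq : 2 < q) (ha : 0 < a) (F : ℝ → ℝ) (hF : ContDiff ℝ 1 F)
    (hF0 : F 0 = 0)
    (hF' : ∀ t : ℝ, |deriv F t| ≤ a * (|t| + |t| ^ (q - 1))) (t : ℝ) :
    |F t| ≤ a * (|t| ^ 2 + |t| ^ q) := by
  have h := aux_grow q a hq ha F hF hF' 0 t
  simp only [zero_add, abs_zero, hF0, sub_zero] at h
  have h2 : a * (|t| + |t| ^ (q-1)) * |t| = a * (|t| * |t| + |t| ^ (q-1) * |t|) := by ring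
  rw [h2, aux_mul_self |t| q (abs_nonneg t) (by linarith)] at h
  nlinarith [h, sq_nonneg |t|]

lemma aux_pointwise (q a : ℝ) (hq : 2 < q) (ha : 0 < a) (F : ℝ → ℝ) (hF : ContDiff ℝ 1 F)
    (hF0 : F 0 = 0)
    (hF' : ∀ t : ℝ, |deriv F t| ≤ a * (|t| + |t| ^ (q - 1))) (ε : ℝ) (hε : 0 < ε) :
    ∃ C : ℝ, 0 ≤ C ∧ ∀ s t : ℝ, |F (s + t) - F s - F t| ≤
      ε * (|s| ^ 2 + |s| ^ q) + C * (|t| ^ 2 + |t| ^ q) := by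
  set P : ℝ := 2 ^ (q-1) with hP
  have hP0 : 0 < P := Real.rpow_pos_of_pos (by norm_num) _
  set δ : ℝ := ε / (a + a * P) with hδdef
  have hδ : 0 < δ := by positivity
  have haδ : a * δ ≤ ε := by
    rw [hδdef, mul_div_assoc', div_le_iff₀ (by positivity)]
    nlinarith [mul_pos hε (mul_pos ha hP0)]
  have haPδ : a * P * δ ≤ ε := by
    rw [hδdef, mul_div_assoc', div_le_iff₀ (by positivity)]
    nlinarith [mul_pos hε ha]
  refine ⟨a * δ⁻¹ + 2*a + a*P*δ^(1-q) + a*P + a, by positivity, fun s t => ?_⟩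
  set S := |s| with hS
  set T := |t| with hT
  have hS0 : 0 ≤ S := abs_nonneg s
  have hT0 : 0 ≤ T := abs_nonneg t
  have habs : |F (s+t) - F s - F t| ≤ a * ((S + T) + (S+T)^(q-1)) * T + a * (T^2 + T^q) := by
    have h1 := aux_grow q a hq ha F hF hF' s t
    have h2 := aux_Ft q a hq ha F hF hF0 hF' t
    calc |F (s+t) - F s - F t| = |(F (s+t) - F s) - F t| := by ring_nf
      _ ≤ |F (s+t) - F s| + |F t| := abs_sub _ _
      _ ≤ _ := add_le_add h1 h2
  have B1 : S * T ≤ δ * S^2 + δ⁻¹ * T^2 := by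
    nlinarith [mul_nonneg (sq_nonneg (δ*S - T)) (le_of_lt (inv_pos.mpr hδ)),
      mul_inv_cancel₀ (ne_of_gt hδ), mul_nonneg hS0 hT0, sq_nonneg (δ*S - T)]
  have B2 : (S+T)^(q-1) ≤ P * (S^(q-1) + T^(q-1)) := aux_two_rpow (q-1) S T (by linarith) hS0 hT0
  have B3 : S^(q-1) * T ≤ δ * S^q + δ^(1-q) * T^q := aux_young q δ S T (by linarith) hδ hS0 hT0
  have B4 : T^(q-1) * T = T^q := aux_mul_self T q hT0 (by linarith)
  have d1 : (S+T)^(q-1) * T ≤ (P * (S^(q-1) + T^(q-1))) * T := mul_le_mul_of_nonneg_right B2 hT0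
  have d3 : P * (S^(q-1) * T) ≤ P * (δ * S^q + δ^(1-q) * T^q) :=
    mul_le_mul_of_nonneg_left B3 (le_of_lt hP0)
  have m2' : (S+T)^(q-1) * T ≤ P * (δ * S^q + δ^(1-q) * T^q) + P * T^q := by nlinarith
  have k1 : a * δ * S^2 ≤ ε * S^2 := mul_le_mul_of_nonneg_right haδ (by positivity)
  have k2 : a * P * δ * S^q ≤ ε * S^q := mul_le_mul_of_nonneg_right haPδ
    (Real.rpow_nonneg hS0 q)
  clear_value P δ S T
  have hint1 : a * (S*T) ≤ a * (δ * S^2 + δ⁻¹ * T^2) :=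
    mul_le_mul_of_nonneg_left B1 (le_of_lt ha)
  have hint2 : a * ((S+T)^(q-1) * T) ≤ a * (P * (δ * S^q + δ^(1-q) * T^q) + P * T^q) :=
    mul_le_mul_of_nonneg_left m2' (le_of_lt ha)
  have hx1 : 0 ≤ (a*P*δ^(1-q) + a*P + a) * T^2 := by positivity
  have hx2 : 0 ≤ (a*δ⁻¹ + 2*a) * T^q := by
    have : 0 ≤ T^q := Real.rpow_nonneg hT0 q
    positivity
  linarith [hint1, hint2, hx1, hx2, k1, k2, habs]


lemma aux_int_bound {α : Type*} [MeasurableSpace α] {μ : Measure α} (f : α → ℝ) (p : ℝ≥0∞)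
    (K : ℝ) (hp0 : p ≠ 0) (hpt : p ≠ ∞) (hf : MemLp f p μ) (hK : 0 ≤ K)
    (hbd : eLpNorm f p μ ≤ ENNReal.ofReal K) :
    ∫ x, ‖f x‖ ^ p.toReal ∂μ ≤ K ^ p.toReal := by
  rw [hf.eLpNorm_eq_integral_rpow_norm hp0 hpt] at hbd
  have hI : 0 ≤ ∫ x, ‖f x‖ ^ p.toReal ∂μ :=
    integral_nonneg fun x => Real.rpow_nonneg (norm_nonneg _) _
  have h2 : (∫ x, ‖f x‖ ^ p.toReal ∂μ) ^ (p.toReal)⁻¹ ≤ K :=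
    (ENNReal.ofReal_le_ofReal_iff hK).mp hbd
  have hpt0 : 0 < p.toReal := ENNReal.toReal_pos hp0 hpt
  calc ∫ x, ‖f x‖ ^ p.toReal ∂μ
      = ((∫ x, ‖f x‖ ^ p.toReal ∂μ) ^ (p.toReal)⁻¹) ^ p.toReal :=
        (Real.rpow_inv_rpow hI (ne_of_gt hpt0)).symm
    _ ≤ K ^ p.toReal := Real.rpow_le_rpow (by positivity) h2 (le_of_lt hpt0)

theorem stmt_10 (N : ℕ) (hN : 1 ≤ N) (q a : ℝ) (hq : 2 < q) (ha : 0 < a)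
    (F : ℝ → ℝ) (hF : ContDiff ℝ 1 F) (hF0 : F 0 = 0)
    (hF' : ∀ t : ℝ, |deriv F t| ≤ a * (|t| + |t| ^ (q - 1)))
    (u : ℕ → EuclideanSpace ℝ (Fin N) → ℝ) (v : EuclideanSpace ℝ (Fin N) → ℝ)
    (hu2 : ∀ n, MeasureTheory.MemLp (u n) 2 MeasureTheory.volume)
    (huq : ∀ n, MeasureTheory.MemLp (u n) (ENNReal.ofReal q) MeasureTheory.volume)
    (M : ℝ)
    (hb : ∀ n, MeasureTheory.eLpNorm (u n) 2 MeasureTheory.volume ≤ ENNReal.ofReal M ∧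
      MeasureTheory.eLpNorm (u n) (ENNReal.ofReal q) MeasureTheory.volume ≤ ENNReal.ofReal M)
    (hae : ∀ᵐ x : EuclideanSpace ℝ (Fin N), Tendsto (fun n => u n x) atTop (𝓝 (v x))) :
    Tendsto (fun n => ∫ x : EuclideanSpace ℝ (Fin N),
      |F (u n x) - F (u n x - v x) - F (v x)|) atTop (𝓝 0) := by
  have hq0' : (0:ℝ) < q := by linarith
  have hq1 : (1:ℝ≥0∞) ≤ ENNReal.ofReal q := by
    rw [← ENNReal.ofReal_one]; exact ENNReal.ofReal_le_ofReal (by linarith)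
  have hq0 : ENNReal.ofReal q ≠ 0 := by
    simp only [ne_eq, ENNReal.ofReal_eq_zero, not_le]; linarith
  have hqt : ENNReal.ofReal q ≠ ∞ := ENNReal.ofReal_ne_top
  have hqtr : (ENNReal.ofReal q).toReal = q := ENNReal.toReal_ofReal (le_of_lt hq0')
  have h2t : ((2:ℝ≥0∞)).toReal = (2:ℝ) := by simp
  have hmu : ∀ n, AEStronglyMeasurable (u n) volume := fun n => (hu2 n).aestronglyMeasurable
  have hv_meas : AEStronglyMeasurable v volume := aestronglyMeasurable_of_tendsto_ae atTop hmu hae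
  -- v is in L² and L^q with norm ≤ M
  have hlim2 : eLpNorm v 2 volume ≤ ENNReal.ofReal M := by
    refine (Lp.eLpNorm_lim_le_liminf_eLpNorm hmu v hae).trans ?_
    refine le_trans (Filter.liminf_le_liminf (Filter.Eventually.of_forall fun n => (hb n).1)) ?_
    simp [Filter.liminf_const]
  have hlimq : eLpNorm v (ENNReal.ofReal q) volume ≤ ENNReal.ofReal M := by
    refine (Lp.eLpNorm_lim_le_liminf_eLpNorm hmu v hae).trans ?_
    refine le_trans (Filter.liminf_le_liminf (Filter.Eventually.of_forall fun n => (hb n).2)) ?_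
    simp [Filter.liminf_const]
  have hv2 : MemLp v 2 volume := ⟨hv_meas, lt_of_le_of_lt hlim2 ENNReal.ofReal_lt_top⟩
  have hvq : MemLp v (ENNReal.ofReal q) volume :=
    ⟨hv_meas, lt_of_le_of_lt hlimq ENNReal.ofReal_lt_top⟩
  set K : ℝ := max M 0 with hKdef
  have hK0 : (0:ℝ) ≤ K := le_max_right M 0
  have hMK : ENNReal.ofReal M ≤ ENNReal.ofReal K := ENNReal.ofReal_le_ofReal (le_max_left M 0)
  -- the difference sequence
  set w : ℕ → EuclideanSpace ℝ (Fin N) → ℝ := fun n x => u n x - v x with hwdef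
  have hw_sm : ∀ n, AEStronglyMeasurable (w n) volume := fun n => (hmu n).sub hv_meas
  have hw2 : ∀ n, MemLp (w n) 2 volume := fun n => (hu2 n).sub hv2
  have hwq : ∀ n, MemLp (w n) (ENNReal.ofReal q) volume := fun n => (huq n).sub hvq
  have hwb2 : ∀ n, eLpNorm (w n) 2 volume ≤ ENNReal.ofReal (2*K) := by
    intro n
    refine (eLpNorm_sub_le (hmu n) hv_meas one_le_two).trans ?_
    have : ENNReal.ofReal (2*K) = ENNReal.ofReal K + ENNReal.ofReal K := by
      rw [← ENNReal.ofReal_add hK0 hK0]; ring_nf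
    rw [this]
    exact add_le_add ((hb n).1.trans hMK) (hlim2.trans hMK)
  have hwbq : ∀ n, eLpNorm (w n) (ENNReal.ofReal q) volume ≤ ENNReal.ofReal (2*K) := by
    intro n
    refine (eLpNorm_sub_le (hmu n) hv_meas hq1).trans ?_
    have : ENNReal.ofReal (2*K) = ENNReal.ofReal K + ENNReal.ofReal K := by
      rw [← ENNReal.ofReal_add hK0 hK0]; ring_nf
    rw [this]
    exact add_le_add ((hb n).2.trans hMK) (hlimq.trans hMK)
  -- pointwise functions
  set g : ℕ → EuclideanSpace ℝ (Fin N) → ℝ := fun n x => |w n x| ^ 2 + |w n x| ^ q with hgdef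
  set hh : EuclideanSpace ℝ (Fin N) → ℝ := fun x => |v x| ^ 2 + |v x| ^ q with hhdef
  have habs_eq2 : ∀ y : ℝ, ‖y‖ ^ ((2:ℝ≥0∞)).toReal = |y| ^ 2 := by
    intro y
    rw [h2t, Real.norm_eq_abs, show (2:ℝ) = ((2:ℕ):ℝ) by norm_num, Real.rpow_natCast]
  have habs_eqq : ∀ y : ℝ, ‖y‖ ^ ((ENNReal.ofReal q)).toReal = |y| ^ q := by
    intro y; rw [hqtr, Real.norm_eq_abs]
  -- integrability of g n and hh with uniform bound
  have hint2 : ∀ n, Integrable (fun x => |w n x| ^ 2) volume := by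
    intro n
    have := (hw2 n).integrable_norm_rpow two_ne_zero ENNReal.ofNat_ne_top
    refine this.congr (Filter.Eventually.of_forall fun x => ?_)
    exact habs_eq2 (w n x)
  have hintq : ∀ n, Integrable (fun x => |w n x| ^ q) volume := by
    intro n
    have := (hwq n).integrable_norm_rpow hq0 hqt
    refine this.congr (Filter.Eventually.of_forall fun x => ?_)
    exact habs_eqq (w n x)
  have hint_g : ∀ n, Integrable (g n) volume := fun n => (hint2 n).add (hintq n)
  have hint_h2 : Integrable (fun x => |v x| ^ 2) volume := by
    have := hv2.integrable_norm_rpow two_ne_zero ENNReal.ofNat_ne_top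
    exact this.congr (Filter.Eventually.of_forall fun x => habs_eq2 (v x))
  have hint_hq : Integrable (fun x => |v x| ^ q) volume := by
    have := hvq.integrable_norm_rpow hq0 hqt
    exact this.congr (Filter.Eventually.of_forall fun x => habs_eqq (v x))
  have hint_hh : Integrable hh volume := hint_h2.add hint_hq
  -- uniform bound on ∫ g n
  set C₀ : ℝ := (2*K) ^ 2 + (2*K) ^ q with hC₀def
  have hC₀0 : 0 ≤ C₀ := by positivity
  have hIg : ∀ n, ∫ x, g n x ≤ C₀ := by
    intro n
    have e2 : ∫ x, |w n x| ^ 2 ∂(volume) ≤ (2*K) ^ 2 := by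
      have := aux_int_bound (w n) 2 (2*K) two_ne_zero ENNReal.ofNat_ne_top (hw2 n)
        (by positivity) (hwb2 n)
      calc ∫ x, |w n x| ^ 2 ∂(volume) = ∫ x, ‖w n x‖ ^ ((2:ℝ≥0∞)).toReal ∂(volume) := by
            refine integral_congr_ae (Filter.Eventually.of_forall fun x => ?_)
            exact (habs_eq2 (w n x)).symm
        _ ≤ (2*K) ^ ((2:ℝ≥0∞)).toReal := this
        _ = (2*K) ^ 2 := by
            rw [h2t, show (2:ℝ) = ((2:ℕ):ℝ) by norm_num, Real.rpow_natCast]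
    have eq' : ∫ x, |w n x| ^ q ∂(volume) ≤ (2*K) ^ q := by
      have := aux_int_bound (w n) (ENNReal.ofReal q) (2*K) hq0 hqt (hwq n)
        (by positivity) (hwbq n)
      calc ∫ x, |w n x| ^ q ∂(volume)
          = ∫ x, ‖w n x‖ ^ ((ENNReal.ofReal q)).toReal ∂(volume) := by
            refine integral_congr_ae (Filter.Eventually.of_forall fun x => ?_)
            exact (habs_eqq (w n x)).symm
        _ ≤ (2*K) ^ ((ENNReal.ofReal q)).toReal := this
        _ = (2*K) ^ q := by rw [hqtr]
    have : ∫ x, g n x = (∫ x, |w n x| ^ 2) + ∫ x, |w n x| ^ q :=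
      integral_add (hint2 n) (hintq n)
    rw [this]; exact add_le_add e2 eq'
  -- measurability of the integrand sequence
  set f : ℕ → EuclideanSpace ℝ (Fin N) → ℝ := fun n x => |F (u n x) - F (u n x - v x) - F (v x)| with hfdef
  have hf_sm : ∀ n, AEStronglyMeasurable (f n) volume := by
    intro n
    have h1 : AEStronglyMeasurable (fun x => F (u n x)) volume :=
      hF.continuous.comp_aestronglyMeasurable (hmu n)
    have h2 : AEStronglyMeasurable (fun x => F (u n x - v x)) volume :=
      hF.continuous.comp_aestronglyMeasurable ((hmu n).sub hv_meas)
    have h3 : AEStronglyMeasurable (fun x => F (v x)) volume :=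
      hF.continuous.comp_aestronglyMeasurable hv_meas
    exact continuous_abs.comp_aestronglyMeasurable ((h1.sub h2).sub h3)
  have hg_sm : ∀ n, AEStronglyMeasurable (g n) volume := by
    intro n
    have gcont : Continuous (fun t : ℝ => |t| ^ 2 + |t| ^ q) := by
      apply Continuous.add
      · exact (continuous_abs.pow 2)
      · exact continuous_abs.rpow_const (fun x => Or.inr (le_of_lt hq0'))
    exact gcont.comp_aestronglyMeasurable (hw_sm n)
  -- pointwise a.e. convergence facts
  have hconv : ∀ᵐ x : EuclideanSpace ℝ (Fin N), Tendsto (fun n => f n x) atTop (𝓝 0) ∧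
      Tendsto (fun n => g n x) atTop (𝓝 0) := by
    filter_upwards [hae] with x hx
    have hw0 : Tendsto (fun n => w n x) atTop (𝓝 0) := by
      have := hx.sub (tendsto_const_nhds (x := v x))
      simpa using this
    constructor
    · have hFu : Tendsto (fun n => F (u n x)) atTop (𝓝 (F (v x))) :=
        (hF.continuous.tendsto (v x)).comp hx
      have hFw : Tendsto (fun n => F (u n x - v x)) atTop (𝓝 (F 0)) :=
        (hF.continuous.tendsto 0).comp hw0
      have : Tendsto (fun n => F (u n x) - F (u n x - v x) - F (v x)) atTop
          (𝓝 (F (v x) - F 0 - F (v x))) := (hFu.sub hFw).sub tendsto_const_nhds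
      rw [hF0] at this
      simp only [sub_zero, sub_self] at this
      have habs := this.abs
      simpa using habs
    · have habs : Tendsto (fun n => |w n x|) atTop (𝓝 0) := by
        simpa using hw0.abs
      have hsq : Tendsto (fun n => |w n x| ^ 2) atTop (𝓝 0) := by
        have := habs.pow 2
        simpa using this
      have hrq : Tendsto (fun n => |w n x| ^ q) atTop (𝓝 0) := by
        have hc : ContinuousAt (fun y : ℝ => y ^ q) 0 :=
          Real.continuousAt_rpow_const 0 q (Or.inr (le_of_lt hq0'))
        have := hc.tendsto.comp habs
        simpa [Function.comp_def, Real.zero_rpow (ne_of_gt hq0')] using this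
      have hadd := hsq.add hrq
      simp only [add_zero] at hadd
      exact hadd
  -- pointwise inequality relating f, g, hh
  -- main ε-δ argument
  rw [Metric.tendsto_atTop]
  intro ε' hε'
  set ε : ℝ := ε' / (2 * (C₀ + 1)) with hεdef
  have hε : 0 < ε := by positivity
  obtain ⟨C, hC0, hC⟩ := aux_pointwise q a hq ha F hF hF0 hF' ε hε
  have hkey : ∀ n x, f n x ≤ ε * g n x + C * hh x := by
    intro n x
    have := hC (u n x - v x) (v x)
    rw [sub_add_cancel] at this
    exact this
  set W : ℕ → EuclideanSpace ℝ (Fin N) → ℝ := fun n x => max (f n x - ε * g n x) 0 with hWdef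
  have hW_nonneg : ∀ n x, 0 ≤ W n x := fun n x => le_max_right _ _
  have hW_le : ∀ n x, W n x ≤ C * hh x := by
    intro n x
    apply max_le
    · have := hkey n x; linarith
    · have : 0 ≤ hh x := by
        have h1 : 0 ≤ |v x| ^ 2 := by positivity
        have h2 : 0 ≤ |v x| ^ q := Real.rpow_nonneg (abs_nonneg _) q
        simp only [hhdef]; linarith
      positivity
  have hW_sm : ∀ n, AEStronglyMeasurable (W n) volume := by
    intro n
    have h1 : AEStronglyMeasurable (fun x => f n x - ε * g n x) volume :=
      (hf_sm n).sub ((hg_sm n).const_mul ε)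
    have h2 := h1.sup (aestronglyMeasurable_const (b := (0:ℝ)))
    refine h2.congr (Filter.Eventually.of_forall fun x => ?_)
    simp [Pi.sup_apply, hWdef]
  have hW_int : ∀ n, Integrable (W n) volume := by
    intro n
    refine Integrable.mono' (hint_hh.const_mul C) (hW_sm n)
      (Filter.Eventually.of_forall fun x => ?_)
    rw [Real.norm_eq_abs, abs_of_nonneg (hW_nonneg n x)]
    exact hW_le n x
  have hW_tendsto : Tendsto (fun n => ∫ x, W n x) atTop (𝓝 0) := by
    have := tendsto_integral_of_dominated_convergence (fun x => C * hh x) hW_sm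
      (hint_hh.const_mul C)
      (fun n => Filter.Eventually.of_forall fun x => by
        rw [Real.norm_eq_abs, abs_of_nonneg (hW_nonneg n x)]; exact hW_le n x)
      (by
        filter_upwards [hconv] with x hx
        have h1 : Tendsto (fun n => f n x - ε * g n x) atTop (𝓝 0) := by
          have := hx.1.sub (hx.2.const_mul ε)
          simpa using this
        have h2 : Tendsto (fun n => max (f n x - ε * g n x) 0) atTop (𝓝 (max 0 0)) :=
          h1.max tendsto_const_nhds
        simpa using h2)
    simpa using this
  have hf_int : ∀ n, Integrable (f n) volume := by
    intro n
    refine Integrable.mono' (((hint_g n).const_mul ε).add (hint_hh.const_mul C)) (hf_sm n)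
      (Filter.Eventually.of_forall fun x => ?_)
    rw [Real.norm_eq_abs, abs_of_nonneg (abs_nonneg _)]
    exact hkey n x
  have hf_le : ∀ n, ∫ x, f n x ≤ ε * C₀ + ∫ x, W n x := by
    intro n
    have step1 : ∫ x, f n x ≤ ∫ x, (ε * g n x + W n x) := by
      refine integral_mono (hf_int n) (((hint_g n).const_mul ε).add (hW_int n)) fun x => ?_
      have : f n x - ε * g n x ≤ W n x := le_max_left _ _
      linarith
    have step2 : ∫ x, (ε * g n x + W n x) = ε * (∫ x, g n x) + ∫ x, W n x := by
      rw [integral_add ((hint_g n).const_mul ε) (hW_int n), integral_const_mul]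
    have step3 : ε * (∫ x, g n x) ≤ ε * C₀ := by
      exact mul_le_mul_of_nonneg_left (hIg n) (le_of_lt hε)
    linarith [step1, step2.le, step2.ge, step3]
  have hεC₀ : ε * C₀ < ε' / 2 := by
    rw [hεdef]
    rw [div_mul_eq_mul_div, div_lt_div_iff₀ (by positivity) (by norm_num)]
    nlinarith
  obtain ⟨n₀, hn₀⟩ := (Metric.tendsto_atTop.mp hW_tendsto) (ε' / 2 - ε * C₀) (by linarith)
  refine ⟨n₀, fun n hn => ?_⟩
  have hWn := hn₀ n hn
  rw [Real.dist_eq, sub_zero] at hWn ⊢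
  have hfn_nonneg : 0 ≤ ∫ x, f n x := integral_nonneg fun x => abs_nonneg _
  have hWn' : ∫ x, W n x < ε' / 2 - ε * C₀ := lt_of_abs_lt hWn
  rw [abs_of_nonneg hfn_nonneg]
  have hfle := hf_le n
  clear_value ε C₀ f W
  linarith [hfle, hWn', hε']
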